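/- Suppose Y is a real normed space that is strictly convex and there exists a nonzero linear mapping T : X → Y such that for all x,y ∈ X, x ⊥_{ρ*} y implies Tx ⊥_{ρ*} Ty. Then X is strictly convex. Likewise, if Y is an inner product space (its norm is induced by an inner product) and such a T exists, then X is an inner product space. -/

import Mathlib

open Filter Topology

/-- The norm derivative `ρ₊(x,y) = lim_{t→0⁺} (‖x+ty‖² − ‖x‖²)/(2t)`. -/
noncomputable def rhoPlus {X : Type*} [NormedAddCommGroup X] [NormedSpace ℝ X] (x y : X) : ℝ :=
  limUnder (𝓝[>] (0 : ℝ)) (fun t : ℝ => (‖x + t • y‖ ^ 2 - ‖x‖ ^ 2) / (2 * t))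

/-- The norm derivative `ρ₋(x,y) = lim_{t→0⁻} (‖x+ty‖² − ‖x‖²)/(2t)`. -/
noncomputable def rhoMinus {X : Type*} [NormedAddCommGroup X] [NormedSpace ℝ X] (x y : X) : ℝ :=
  limUnder (𝓝[<] (0 : ℝ)) (fun t : ℝ => (‖x + t • y‖ ^ 2 - ‖x‖ ^ 2) / (2 * t))

/-- `ρ*(x,y) := ρ₋(x,y)·ρ₊(x,y)`. -/
noncomputable def rhoStar {X : Type*} [NormedAddCommGroup X] [NormedSpace ℝ X] (x y : X) : ℝ :=
  rhoMinus x y * rhoPlus x y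

open Set

namespace RhoAux

variable {X : Type*} [NormedAddCommGroup X] [NormedSpace ℝ X]

/-- The difference quotient. -/
noncomputable def rq (x y : X) (t : ℝ) : ℝ := (‖x + t • y‖ ^ 2 - ‖x‖ ^ 2) / (2 * t)

lemma rhoPlus_def (x y : X) : rhoPlus x y = limUnder (𝓝[>] (0 : ℝ)) (rq x y) := rfl
lemma rhoMinus_def (x y : X) : rhoMinus x y = limUnder (𝓝[<] (0 : ℝ)) (rq x y) := rfl

lemma convexOn_nrm (x y : X) : ConvexOn ℝ Set.univ (fun t : ℝ => ‖x + t • y‖) := by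
  have h := (convexOn_univ_norm (E := X)).comp_affineMap (AffineMap.lineMap x (x + y))
  have e : ((norm : X → ℝ) ∘ (AffineMap.lineMap x (x + y))) = fun t : ℝ => ‖x + t • y‖ := by
    funext t
    simp [AffineMap.lineMap_apply, add_comm]
  rwa [e] at h

lemma convexOn_nrmsq (x y : X) : ConvexOn ℝ Set.univ (fun t : ℝ => ‖x + t • y‖ ^ 2) := by
  have h := (convexOn_nrm x y).mul (convexOn_nrm x y)
    (fun t _ => norm_nonneg _) (fun t _ => norm_nonneg _)
    (fun i _ j _ h => h.le)
  have e : ((fun t : ℝ => ‖x + t • y‖) * fun t : ℝ => ‖x + t • y‖)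
      = fun t : ℝ => ‖x + t • y‖ ^ 2 := by
    funext t; simp [Pi.mul_apply, sq]
  rwa [e] at h

lemma rq_eq_slope (x y : X) (t : ℝ) :
    rq x y t = slope (fun s : ℝ => ‖x + s • y‖ ^ 2) 0 t / 2 := by
  simp only [rq, slope, sub_zero, vsub_eq_sub, zero_smul, add_zero, div_div]
  rw [smul_eq_mul]; ring

/-- secant monotonicity specialised. -/
lemma rq_mono (x y : X) {s t : ℝ} (hs : s ≠ 0) (ht : t ≠ 0) (hst : s ≤ t) :
    rq x y s ≤ rq x y t := by
  rw [rq_eq_slope, rq_eq_slope, slope_def_field, slope_def_field]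
  have h := (convexOn_nrmsq x y).secant_mono (mem_univ (0:ℝ)) (mem_univ s) (mem_univ t) hs ht hst
  exact (div_le_div_iff_of_pos_right (by norm_num : (0:ℝ) < 2)).2 h

lemma tendsto_rq_plus (x y : X) :
    Tendsto (rq x y) (𝓝[>] (0:ℝ)) (𝓝 (rhoPlus x y)) := by
  have mono : MonotoneOn (rq x y) (Ioi (0:ℝ)) := fun a ha b hb hab =>
    rq_mono x y (ne_of_gt ha) (ne_of_gt hb) hab
  have bdd : BddBelow (rq x y '' Ioi (0:ℝ)) := by
    refine ⟨rq x y (-1), ?_⟩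
    rintro r ⟨t, ht, rfl⟩
    exact rq_mono x y (by norm_num) (ne_of_gt ht) (by linarith [mem_Ioi.1 ht])
  have T := mono.tendsto_nhdsGT bdd
  have : rhoPlus x y = sInf (rq x y '' Ioi 0) := (rhoPlus_def x y).trans T.limUnder_eq
  rw [this]; exact T

lemma rq_neg (x y : X) (t : ℝ) : rq x y (-t) = - rq x (-y) t := by
  simp only [rq, neg_smul, smul_neg]
  rw [show x + -(t • y) = x + t • (-y) by simp]
  ring

lemma tendsto_neg_IioIoi : Tendsto (fun t : ℝ => -t) (𝓝[<] (0:ℝ)) (𝓝[>] (0:ℝ)) := by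
  rw [tendsto_nhdsWithin_iff]
  constructor
  · have : Tendsto (fun t : ℝ => -t) (𝓝 (0:ℝ)) (𝓝 (-0 : ℝ)) := tendsto_neg 0
    simpa using this.mono_left nhdsWithin_le_nhds
  · exact eventually_mem_nhdsWithin.mono fun t ht => by
      simp only [mem_Iio] at ht; simp only [mem_Ioi]; linarith

lemma rhoMinus_eq (x y : X) : rhoMinus x y = - rhoPlus x (-y) := by
  have T : Tendsto (rq x y) (𝓝[<] (0:ℝ)) (𝓝 (- rhoPlus x (-y))) := by
    have h1 : Tendsto (fun t : ℝ => rq x (-y) (-t)) (𝓝[<] (0:ℝ)) (𝓝 (rhoPlus x (-y))) :=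
      (tendsto_rq_plus x (-y)).comp tendsto_neg_IioIoi
    have h2 := h1.neg
    refine h2.congr fun t => ?_
    rw [show t = -(-t) by ring, rq_neg x y (-t)]
    simp
  exact (rhoMinus_def x y).trans T.limUnder_eq

lemma tendsto_rq_minus (x y : X) :
    Tendsto (rq x y) (𝓝[<] (0:ℝ)) (𝓝 (rhoMinus x y)) := by
  rw [rhoMinus_eq]
  have h1 : Tendsto (fun t : ℝ => rq x (-y) (-t)) (𝓝[<] (0:ℝ)) (𝓝 (rhoPlus x (-y))) :=
    (tendsto_rq_plus x (-y)).comp tendsto_neg_IioIoi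
  refine h1.neg.congr fun t => ?_
  rw [show t = -(-t) by ring, rq_neg x y (-t)]
  simp

lemma rhoPlus_eq_of_tendsto {x y : X} {L : ℝ}
    (h : Tendsto (rq x y) (𝓝[>] (0:ℝ)) (𝓝 L)) : rhoPlus x y = L :=
  tendsto_nhds_unique (tendsto_rq_plus x y) h

lemma rhoMinus_eq_of_tendsto {x y : X} {L : ℝ}
    (h : Tendsto (rq x y) (𝓝[<] (0:ℝ)) (𝓝 L)) : rhoMinus x y = L :=
  tendsto_nhds_unique (tendsto_rq_minus x y) h

lemma rhoPlus_le_rq (x y : X) {t : ℝ} (ht : 0 < t) : rhoPlus x y ≤ rq x y t := by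
  refine le_of_tendsto (tendsto_rq_plus x y) ?_
  filter_upwards [Ioo_mem_nhdsGT_of_mem (left_mem_Ico.2 ht)] with s hs
  exact rq_mono x y (ne_of_gt hs.1) (ne_of_gt ht) hs.2.le

lemma rq_le_rhoMinus (x y : X) {t : ℝ} (ht : t < 0) : rq x y t ≤ rhoMinus x y := by
  refine ge_of_tendsto (tendsto_rq_minus x y) ?_
  filter_upwards [Ioo_mem_nhdsLT_of_mem (mem_Ioc.2 ⟨ht, le_refl (0:ℝ)⟩)] with s hs
  exact rq_mono x y (ne_of_lt ht) (ne_of_lt hs.2) hs.1.le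

lemma rhoMinus_le_rhoPlus (x y : X) : rhoMinus x y ≤ rhoPlus x y := by
  have h1 : ∀ s : ℝ, 0 < s → rhoMinus x y ≤ rq x y s := by
    intro s hs
    refine le_of_tendsto (tendsto_rq_minus x y) ?_
    filter_upwards [self_mem_nhdsWithin] with t ht
    exact rq_mono x y (ne_of_lt (mem_Iio.1 ht)) (ne_of_gt hs)
      ((mem_Iio.1 ht).le.trans hs.le)
  refine ge_of_tendsto (tendsto_rq_plus x y) ?_
  filter_upwards [self_mem_nhdsWithin] with s hs
  exact h1 s hs

lemma rhoPlus_zero_right (x : X) : rhoPlus x 0 = 0 := by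
  refine rhoPlus_eq_of_tendsto ?_
  have : rq x (0:X) = fun _ => (0:ℝ) := by
    funext t; simp [rq]
  rw [this]; exact tendsto_const_nhds

lemma rhoMinus_zero_right (x : X) : rhoMinus x 0 = 0 := by
  rw [rhoMinus_eq]; simp [rhoPlus_zero_right]

lemma rho_zero_left_plus (y : X) : rhoPlus (0:X) y = 0 := by
  refine rhoPlus_eq_of_tendsto ?_
  have e : rq (0:X) y = fun t : ℝ => t * ‖y‖ ^ 2 / 2 := by
    funext t
    rcases eq_or_ne t 0 with rfl | ht
    · simp [rq]
    · simp only [rq, zero_add, norm_smul, Real.norm_eq_abs, norm_zero, mul_pow, sq_abs]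
      field_simp
      ring
  rw [e]
  have : Tendsto (fun t : ℝ => t * ‖y‖ ^ 2 / 2) (𝓝 (0:ℝ)) (𝓝 (0 * ‖y‖^2 / 2)) :=
    (tendsto_id.mul_const _).div_const 2
  simpa using this.mono_left nhdsWithin_le_nhds

lemma rho_zero_left_minus (y : X) : rhoMinus (0:X) y = 0 := by
  rw [rhoMinus_eq, rho_zero_left_plus, neg_zero]

lemma rhoPlus_smul_right (x y : X) {c : ℝ} (hc : 0 < c) :
    rhoPlus x (c • y) = c * rhoPlus x y := by
  refine rhoPlus_eq_of_tendsto ?_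
  have e : ∀ t : ℝ, rq x (c • y) t = c * rq x y (c * t) := by
    intro t
    rcases eq_or_ne t 0 with rfl | ht
    · simp [rq]
    · simp only [rq, smul_smul]
      rw [mul_comm t c]
      field_simp
  have hcm : Tendsto (fun t : ℝ => c * t) (𝓝[>] (0:ℝ)) (𝓝[>] (0:ℝ)) := by
    rw [tendsto_nhdsWithin_iff]
    constructor
    · have h0 : Tendsto (fun t : ℝ => c * t) (𝓝 (0:ℝ)) (𝓝 (c * 0)) :=
        tendsto_const_nhds.mul tendsto_id
      simpa using h0.mono_left nhdsWithin_le_nhds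
    · filter_upwards [self_mem_nhdsWithin] with t ht
      exact mem_Ioi.2 (mul_pos hc (mem_Ioi.1 ht))
  have := ((tendsto_rq_plus x y).comp hcm).const_mul c
  exact (this.congr fun t => (e t).symm)

lemma rhoPlus_smul_add (x y : X) (a : ℝ) :
    rhoPlus x (a • x + y) = a * ‖x‖ ^ 2 + rhoPlus x y := by
  set δ : ℝ := (|a| + 1)⁻¹ with hδdef
  have hδ : 0 < δ := by positivity
  have hden : ∀ t ∈ Ioo (0:ℝ) δ, 0 < 1 + t * a := by
    intro t ht
    have h1 : t * (-|a|) ≤ t * a := mul_le_mul_of_nonneg_left (neg_abs_le a) ht.1.le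
    have h3 : δ * (|a| + 1) = 1 := inv_mul_cancel₀ (by positivity)
    nlinarith [mul_nonneg (sub_nonneg.2 ht.2.le) (abs_nonneg a), abs_nonneg a, ht.1, ht.2]
  set s : ℝ → ℝ := fun t => t / (1 + t * a) with hsdef
  have hs : Tendsto s (𝓝[>] (0:ℝ)) (𝓝[>] (0:ℝ)) := by
    rw [tendsto_nhdsWithin_iff]
    constructor
    · have h0 : Tendsto s (𝓝 (0:ℝ)) (𝓝 (0 / (1 + 0 * a))) :=
        tendsto_id.div ((tendsto_id.mul_const a).const_add 1) (by norm_num)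
      simpa using h0.mono_left nhdsWithin_le_nhds
    · filter_upwards [Ioo_mem_nhdsGT_of_mem (left_mem_Ico.2 hδ)] with t ht
      exact mem_Ioi.2 (div_pos ht.1 (hden t ht))
  have hev : ∀ᶠ t in 𝓝[>] (0:ℝ),
      rq x (a • x + y) t = (1 + t * a) * rq x y (s t) + (a + t * a ^ 2 / 2) * ‖x‖ ^ 2 := by
    filter_upwards [Ioo_mem_nhdsGT_of_mem (left_mem_Ico.2 hδ)] with t ht
    have h1 : (0:ℝ) < 1 + t * a := hden t ht
    have hcancel : (1 + t * a) * (t / (1 + t * a)) = t := by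
      rw [mul_comm, div_mul_cancel₀ _ (ne_of_gt h1)]
    have hv : x + t • (a • x + y) = (1 + t * a) • (x + s t • y) := by
      have hcancel2 : (1 + a * t) * (t / (1 + a * t)) = t := by
        rw [mul_comm a t]
        exact hcancel
      simp only [hsdef, smul_add, smul_smul, hcancel, add_smul, one_smul, mul_comm t a]
      rw [hcancel2]
      abel
    have hn : ‖x + t • (a • x + y)‖ = (1 + t * a) * ‖x + s t • y‖ := by
      rw [hv, norm_smul, Real.norm_eq_abs, abs_of_pos h1]
    have hst : s t ≠ 0 := ne_of_gt (div_pos ht.1 h1)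
    rw [rq, rq, hn, hsdef]
    have ht0 : t ≠ 0 := ne_of_gt ht.1
    field_simp
    ring
  have hT : Tendsto (fun t : ℝ => (1 + t * a) * rq x y (s t) + (a + t * a ^ 2 / 2) * ‖x‖ ^ 2)
      (𝓝[>] (0:ℝ)) (𝓝 ((1 + 0 * a) * rhoPlus x y + (a + 0 * a ^ 2 / 2) * ‖x‖ ^ 2)) := by
    refine Tendsto.add (Tendsto.mul ?_ ((tendsto_rq_plus x y).comp hs)) (Tendsto.mul_const _ ?_)
    · exact ((tendsto_id.mul_const a).const_add 1).mono_left nhdsWithin_le_nhds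
    · exact ((tendsto_id.mul_const (a^2)).div_const 2).const_add a |>.mono_left nhdsWithin_le_nhds
  have := rhoPlus_eq_of_tendsto (hT.congr' (hev.mono fun t h => h.symm))
  rw [this]; ring

lemma rhoMinus_smul_add (x y : X) (a : ℝ) :
    rhoMinus x (a • x + y) = a * ‖x‖ ^ 2 + rhoMinus x y := by
  rw [rhoMinus_eq, rhoMinus_eq, show -(a • x + y) = (-a) • x + (-y) by
    rw [neg_add, ← neg_smul], rhoPlus_smul_add]
  ring

lemma rhoPlus_smul_self (x : X) (a : ℝ) : rhoPlus x (a • x) = a * ‖x‖ ^ 2 := by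
  have := rhoPlus_smul_add x 0 a
  simpa [rhoPlus_zero_right] using this

lemma rhoMinus_smul_self (x : X) (a : ℝ) : rhoMinus x (a • x) = a * ‖x‖ ^ 2 := by
  have := rhoMinus_smul_add x 0 a
  simpa [rhoMinus_zero_right] using this

lemma rhoStar_smul_self (x : X) (a : ℝ) : rhoStar x (a • x) = (a * ‖x‖ ^ 2) ^ 2 := by
  rw [rhoStar, rhoPlus_smul_self, rhoMinus_smul_self]
  ring

lemma rhoPlus_eq_zero_of_const {x y : X} {δ : ℝ} (hδ : 0 < δ)
    (h : ∀ s : ℝ, 0 ≤ s → s ≤ δ → ‖x + s • y‖ = ‖x‖) : rhoPlus x y = 0 := by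
  refine rhoPlus_eq_of_tendsto ?_
  have hev : ∀ᶠ t in 𝓝[>] (0:ℝ), (0:ℝ) = rq x y t := by
    filter_upwards [Ioo_mem_nhdsGT_of_mem (left_mem_Ico.2 hδ)] with t ht
    simp [rq, h t ht.1.le ht.2.le]
  exact tendsto_const_nhds.congr' hev

lemma rhoMinus_eq_zero_of_const {x y : X} {δ : ℝ} (hδ : 0 < δ)
    (h : ∀ s : ℝ, -δ ≤ s → s ≤ 0 → ‖x + s • y‖ = ‖x‖) : rhoMinus x y = 0 := by
  refine rhoMinus_eq_of_tendsto ?_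
  have hev : ∀ᶠ t in 𝓝[<] (0:ℝ), (0:ℝ) = rq x y t := by
    filter_upwards [Ioo_mem_nhdsLT_of_mem (mem_Ioc.2 ⟨neg_lt_zero.2 hδ, le_refl (0:ℝ)⟩)]
      with t ht
    simp [rq, h t ht.1.le ht.2.le]
  exact tendsto_const_nhds.congr' hev

lemma slope_chain_left (x w : X) {t t' : ℝ} (h : t < t') :
    rhoPlus (x + t • w) w ≤ (‖x + t' • w‖ ^ 2 - ‖x + t • w‖ ^ 2) / (2 * (t' - t)) := by
  have e1 : x + t' • w = (x + t • w) + (t' - t) • w := by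
    rw [add_assoc, ← add_smul]
    congr 2
    ring
  have := rhoPlus_le_rq (x + t • w) w (sub_pos.2 h)
  rw [rq] at this
  rw [e1]
  exact this

lemma slope_chain_right (x w : X) {t t' : ℝ} (h : t < t') :
    (‖x + t' • w‖ ^ 2 - ‖x + t • w‖ ^ 2) / (2 * (t' - t)) ≤ rhoMinus (x + t' • w) w := by
  have := rq_le_rhoMinus (x + t' • w) w (t := t - t') (by linarith)
  rw [rq] at this
  have e2 : x + t' • w + (t - t') • w = x + t • w := by
    rw [add_assoc, ← add_smul]
    congr 2
    ring
  rw [e2] at this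
  have e3 : (‖x + t' • w‖ ^ 2 - ‖x + t • w‖ ^ 2) / (2 * (t' - t))
      = (‖x + t • w‖ ^ 2 - ‖x + t' • w‖ ^ 2) / (2 * (t - t')) := by
    rw [show (2 * (t - t')) = -(2 * (t' - t)) by ring,
      show ‖x + t • w‖ ^ 2 - ‖x + t' • w‖ ^ 2 = -(‖x + t' • w‖ ^ 2 - ‖x + t • w‖ ^ 2) by ring,
      neg_div_neg_eq]
  rw [e3]
  exact this

lemma hasDerivAt_nrmsq (heq : ∀ u v : X, rhoMinus u v = rhoPlus u v) (x y : X) (t₀ : ℝ) :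
    HasDerivAt (fun t : ℝ => ‖x + t • y‖ ^ 2) (2 * rhoPlus (x + t₀ • y) y) t₀ := by
  rw [hasDerivAt_iff_tendsto_slope]
  have hsl : ∀ t : ℝ, slope (fun t : ℝ => ‖x + t • y‖ ^ 2) t₀ t
      = 2 * rq (x + t₀ • y) y (t - t₀) := by
    intro t
    rw [slope_def_field, rq]
    have e : x + t • y = (x + t₀ • y) + (t - t₀) • y := by
      rw [add_assoc, ← add_smul]
      congr 2
      ring
    rw [e]
    rcases eq_or_ne t t₀ with rfl | h
    · simp
    · have : t - t₀ ≠ 0 := sub_ne_zero.2 h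
      field_simp
  have key : Tendsto (fun d : ℝ => 2 * rq (x + t₀ • y) y d) (𝓝[≠] (0:ℝ))
      (𝓝 (2 * rhoPlus (x + t₀ • y) y)) := by
    have hsplit : 𝓝[≠] (0:ℝ) = 𝓝[<] (0:ℝ) ⊔ 𝓝[>] (0:ℝ) := by
      rw [← Iio_union_Ioi, nhdsWithin_union]
    rw [hsplit, tendsto_sup]
    constructor
    · have h2 := (tendsto_rq_minus (x + t₀ • y) y).const_mul (2:ℝ)
      rw [heq] at h2
      exact h2
    · exact (tendsto_rq_plus (x + t₀ • y) y).const_mul (2:ℝ)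
  have hshift : Tendsto (fun t : ℝ => t - t₀) (𝓝[≠] t₀) (𝓝[≠] (0:ℝ)) := by
    rw [tendsto_nhdsWithin_iff]
    constructor
    · have h0 : Tendsto (fun t : ℝ => t - t₀) (𝓝 t₀) (𝓝 (t₀ - t₀)) :=
        (continuous_id.sub continuous_const).tendsto t₀
      rw [sub_self] at h0
      exact h0.mono_left nhdsWithin_le_nhds
    · exact eventually_mem_nhdsWithin.mono fun t ht => by
        simpa [sub_eq_zero] using ht
  exact (key.comp hshift).congr fun t => (hsl t).symm

end RhoAux

open RhoAux


section Main
variable {X Y : Type*} [NormedAddCommGroup X] [NormedSpace ℝ X]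
  [NormedAddCommGroup Y] [NormedSpace ℝ Y]

lemma exists_ne_zero_img (T : X →ₗ[ℝ] Y) (hT : T ≠ 0) : ∃ x : X, T x ≠ 0 := by
  by_contra hall
  push_neg at hall
  exact hT (LinearMap.ext fun x => by simp [hall x])

lemma key_orth (T : X →ₗ[ℝ] Y)
    (hpres : ∀ x y : X, rhoStar x y = 0 → rhoStar (T x) (T y) = 0)
    {z : X} (hTz : T z = 0) :
    ∀ w : X, T w ≠ 0 → rhoMinus w z = 0 ∧ rhoPlus w z = 0 := by
  intro w hw
  have hwne : w ≠ 0 := fun h => hw (by simp [h])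
  have hn2 : ‖w‖ ^ 2 ≠ 0 := pow_ne_zero 2 (norm_ne_zero_iff.2 hwne)
  have hTn2 : ‖T w‖ ^ 2 ≠ 0 := pow_ne_zero 2 (norm_ne_zero_iff.2 hw)
  have main : ∀ r : ℝ, (r * ‖w‖ ^ 2 + rhoMinus w z) * (r * ‖w‖ ^ 2 + rhoPlus w z) = 0 →
      r = 0 := by
    intro r hstar0
    have hstar : rhoStar w (r • w + z) = 0 := by
      rw [rhoStar, rhoPlus_smul_add, rhoMinus_smul_add]
      exact hstar0
    have h2 := hpres w (r • w + z) hstar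
    rw [map_add, map_smul, hTz, add_zero, rhoStar_smul_self] at h2
    have h3 : r * ‖T w‖ ^ 2 = 0 := by
      have := sq_eq_zero_iff.1 h2
      exact this
    rcases mul_eq_zero.1 h3 with h | h
    · exact h
    · exact absurd h hTn2
  constructor
  · set r := -(rhoMinus w z) / ‖w‖ ^ 2 with hr
    have hrr : r * ‖w‖ ^ 2 = -(rhoMinus w z) := div_mul_cancel₀ _ hn2
    have hz1 : -(rhoMinus w z) + rhoMinus w z = 0 := by ring
    have h0 := main r (by rw [hrr, hz1, zero_mul])
    have : -(rhoMinus w z) = 0 := by rw [← hrr, h0, zero_mul]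
    linarith
  · set r := -(rhoPlus w z) / ‖w‖ ^ 2 with hr
    have hrr : r * ‖w‖ ^ 2 = -(rhoPlus w z) := div_mul_cancel₀ _ hn2
    have hz1 : -(rhoPlus w z) + rhoPlus w z = 0 := by ring
    have h0 := main r (by rw [hrr, hz1, mul_zero])
    have : -(rhoPlus w z) = 0 := by rw [← hrr, h0, zero_mul]
    linarith

lemma T_inj (T : X →ₗ[ℝ] Y) (hT : T ≠ 0)
    (hpres : ∀ x y : X, rhoStar x y = 0 → rhoStar (T x) (T y) = 0) :
    ∀ z : X, z ≠ 0 → T z ≠ 0 := by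
  intro z hz hTz
  obtain ⟨x₀, hx₀⟩ := exists_ne_zero_img T hT
  have hz0 : ∀ s : ℝ, rhoMinus (x₀ + s • z) z = 0 := by
    intro s
    have hTs : T (x₀ + s • z) ≠ 0 := by
      rw [map_add, map_smul, hTz, smul_zero, add_zero]
      exact hx₀
    exact (key_orth T hpres hTz (x₀ + s • z) hTs).1
  have hzpos : 0 < ‖z‖ := norm_pos_iff.2 hz
  set s₀ : ℝ := (2 * ‖x₀‖ + 1) / ‖z‖ with hs₀def
  have hs₀ : 0 < s₀ := by positivity
  have hle : ‖x₀ + s₀ • z‖ ^ 2 ≤ ‖x₀‖ ^ 2 := by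
    have h := rq_le_rhoMinus (x₀ + s₀ • z) z (t := -s₀) (neg_lt_zero.2 hs₀)
    rw [hz0 s₀, rq] at h
    have e : x₀ + s₀ • z + (-s₀) • z = x₀ := by module
    rw [e] at h
    rw [div_le_iff_of_neg (by linarith : 2 * (-s₀) < 0)] at h
    linarith
  have hnorm : ‖s₀ • z‖ = 2 * ‖x₀‖ + 1 := by
    rw [norm_smul, Real.norm_eq_abs, abs_of_pos hs₀, hs₀def, div_mul_cancel₀ _ (ne_of_gt hzpos)]
  have hge : ‖x₀‖ + 1 ≤ ‖x₀ + s₀ • z‖ := by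
    have h1 : ‖s₀ • z‖ ≤ ‖x₀ + s₀ • z‖ + ‖x₀‖ := by
      have := norm_sub_le (x₀ + s₀ • z) x₀
      simpa using this
    linarith [hnorm ▸ h1]
  nlinarith [norm_nonneg x₀, norm_nonneg (x₀ + s₀ • z)]

lemma strict_transfer (T : X →ₗ[ℝ] Y) (hT : T ≠ 0)
    (hpres : ∀ x y : X, rhoStar x y = 0 → rhoStar (T x) (T y) = 0)
    (hsc : ∀ u v : Y, ‖u‖ = 1 → ‖v‖ = 1 → u ≠ v → ‖(1 / 2 : ℝ) • (u + v)‖ < 1) :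
    ∀ u v : X, ‖u‖ = 1 → ‖v‖ = 1 → u ≠ v → ‖(1 / 2 : ℝ) • (u + v)‖ < 1 := by
  have hinj := T_inj T hT hpres
  intro u v hu hv huv
  by_contra hlt
  set x : X := (1 / 2 : ℝ) • (u + v) with hxdef
  set z : X := v - u with hzdef
  clear_value x z
  have hz : z ≠ 0 := by rw [hzdef]; exact sub_ne_zero.2 (Ne.symm huv)
  have upper : ∀ t : ℝ, t ∈ Icc (-(1/2) : ℝ) (1/2) → ‖x + t • z‖ ≤ 1 := by
    intro t ht
    have e : x + t • z = (1/2 - t) • u + (1/2 + t) • v := by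
      rw [hxdef, hzdef]; module
    rw [e]
    calc ‖(1/2 - t) • u + (1/2 + t) • v‖ ≤ ‖(1/2 - t) • u‖ + ‖(1/2 + t) • v‖ := norm_add_le _ _
      _ = |1/2 - t| + |1/2 + t| := by rw [norm_smul, norm_smul, hu, hv, Real.norm_eq_abs,
            Real.norm_eq_abs, mul_one, mul_one]
      _ = (1/2 - t) + (1/2 + t) := by
            rw [abs_of_nonneg (by linarith [ht.2] : (0:ℝ) ≤ 1/2 - t),
              abs_of_nonneg (by linarith [ht.1] : (0:ℝ) ≤ 1/2 + t)]
      _ = 1 := by ring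
  have hx1 : ‖x‖ = 1 := by
    have h1 : ‖x‖ ≤ 1 := by
      have := upper 0 (by constructor <;> norm_num)
      simpa using this
    have h2 : ¬ ‖x‖ < 1 := hlt
    linarith [lt_or_ge (‖x‖) 1 |>.resolve_left h2]
  have seg : ∀ t : ℝ, t ∈ Icc (-(1/2) : ℝ) (1/2) → ‖x + t • z‖ = 1 := by
    intro t ht
    have hneg : -t ∈ Icc (-(1/2) : ℝ) (1/2) := by
      constructor <;> [linarith [ht.2]; linarith [ht.1]]
    have h2 : (2:ℝ) • x = (x + t • z) + (x + (-t) • z) := by module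
    have h3 : (2:ℝ) = ‖(2:ℝ) • x‖ := by
      rw [norm_smul, hx1, Real.norm_eq_abs]; norm_num
    have h4 : ‖(2:ℝ) • x‖ ≤ ‖x + t • z‖ + ‖x + (-t) • z‖ := by
      rw [h2]; exact norm_add_le _ _
    have h5 := upper (-t) hneg
    have h6 := upper t ht
    linarith
  have hXstar : ∀ t : ℝ, t ∈ Icc (-(1/2) : ℝ) (1/2) → rhoStar (x + t • z) z = 0 := by
    intro t ht
    rcases lt_or_ge t (1/2) with hlt2 | hge2
    · have hplus : rhoPlus (x + t • z) z = 0 := by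
        refine rhoPlus_eq_zero_of_const (show (0:ℝ) < 1/2 - t by linarith) ?_
        intro s hs0 hsδ
        have e : x + t • z + s • z = x + (t + s) • z := by module
        rw [e, seg (t+s) ⟨by linarith [ht.1], by linarith⟩, seg t ht]
      rw [rhoStar, hplus, mul_zero]
    · have hgt : -(1/2) < t := by linarith
      have hminus : rhoMinus (x + t • z) z = 0 := by
        refine rhoMinus_eq_zero_of_const (show (0:ℝ) < t + 1/2 by linarith) ?_
        intro s hs0 hsδ
        have e : x + t • z + s • z = x + (t + s) • z := by module
        rw [e, seg (t+s) ⟨by linarith, by linarith [ht.2]⟩, seg t ht]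
      rw [rhoStar, hminus, zero_mul]
  have hYstar : ∀ t : ℝ, t ∈ Icc (-(1/2) : ℝ) (1/2) →
      rhoMinus (T x + t • T z) (T z) * rhoPlus (T x + t • T z) (T z) = 0 := by
    intro t ht
    have e : T (x + t • z) = T x + t • T z := by rw [map_add, map_smul]
    have h := hpres _ z (hXstar t ht)
    rw [rhoStar, e] at h
    exact h
  -- now in Y
  have A : ∀ t : ℝ, -(1/2) ≤ t → t < 1/2 → rhoPlus (T x + t • T z) (T z) ≤ 0 := by
    intro t ht1 ht2
    by_contra hpos
    push_neg at hpos
    set t₁ : ℝ := (t + 1/2) / 2 with ht₁def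
    have htt : t < t₁ := by rw [ht₁def]; linarith
    have ht₁m : t₁ ∈ Icc (-(1/2) : ℝ) (1/2) := ⟨by rw [ht₁def]; linarith, by rw [ht₁def]; linarith⟩
    have hchain := (slope_chain_left (T x) (T z) htt).trans (slope_chain_right (T x) (T z) htt)
    have hM : 0 < rhoMinus (T x + t₁ • T z) (T z) := lt_of_lt_of_le hpos hchain
    have hP : 0 < rhoPlus (T x + t₁ • T z) (T z) :=
      lt_of_lt_of_le hM (rhoMinus_le_rhoPlus _ _)
    nlinarith [hYstar t₁ ht₁m]
  have B : ∀ t : ℝ, -(1/2) < t → t ≤ 1/2 → 0 ≤ rhoMinus (T x + t • T z) (T z) := by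
    intro t ht1 ht2
    by_contra hneg
    push_neg at hneg
    set t₁ : ℝ := (t + -(1/2)) / 2 with ht₁def
    have htt : t₁ < t := by rw [ht₁def]; linarith
    have ht₁m : t₁ ∈ Icc (-(1/2) : ℝ) (1/2) := ⟨by rw [ht₁def]; linarith, by rw [ht₁def]; linarith⟩
    have hchain := (slope_chain_left (T x) (T z) htt).trans (slope_chain_right (T x) (T z) htt)
    have hP : rhoPlus (T x + t₁ • T z) (T z) < 0 := lt_of_le_of_lt hchain hneg
    have hM : rhoMinus (T x + t₁ • T z) (T z) < 0 :=
      lt_of_le_of_lt (rhoMinus_le_rhoPlus _ _) hP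
    nlinarith [hYstar t₁ ht₁m]
  have Cm : rhoPlus (T x + (-(1/2) : ℝ) • T z) (T z) = 0 := by
    have hA := A (-(1/2)) le_rfl (by norm_num)
    rcases mul_eq_zero.1 (hYstar (-(1/2)) ⟨le_rfl, by norm_num⟩) with h | h
    · linarith [rhoMinus_le_rhoPlus (T x + (-(1/2) : ℝ) • T z) (T z), h.ge, h.le]
    · exact h
  have Dm : rhoMinus (T x + ((1/2) : ℝ) • T z) (T z) = 0 := by
    have hB := B (1/2) (by norm_num) le_rfl
    rcases mul_eq_zero.1 (hYstar (1/2) ⟨by norm_num, le_rfl⟩) with h | h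
    · exact h
    · linarith [rhoMinus_le_rhoPlus (T x + ((1/2) : ℝ) • T z) (T z)]
  have P0 : rhoPlus (T x + (0 : ℝ) • T z) (T z) ≤ 0 := A 0 (by norm_num) (by norm_num)
  have M0 : rhoMinus (T x + (0 : ℝ) • T z) (T z) = 0 := by
    have h1 := B 0 (by norm_num) (by norm_num)
    have h2 := rhoMinus_le_rhoPlus (T x + (0 : ℝ) • T z) (T z)
    linarith
  have P0' : rhoPlus (T x + (0 : ℝ) • T z) (T z) = 0 := by
    have := M0 ▸ (rhoMinus_le_rhoPlus (T x + (0 : ℝ) • T z) (T z))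
    linarith
  -- m equalities
  have m1 : ‖T x + (0:ℝ) • T z‖ ^ 2 = ‖T x + (-(1/2):ℝ) • T z‖ ^ 2 := by
    have hl := slope_chain_left (T x) (T z) (show (-(1/2):ℝ) < 0 by norm_num)
    have hr := slope_chain_right (T x) (T z) (show (-(1/2):ℝ) < 0 by norm_num)
    rw [Cm] at hl
    rw [M0] at hr
    have hd : (0:ℝ) < 2 * (0 - -(1/2)) := by norm_num
    have h1 : 0 ≤ ‖T x + (0:ℝ) • T z‖ ^ 2 - ‖T x + (-(1/2):ℝ) • T z‖ ^ 2 := by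
      have := (le_div_iff₀ hd).1 hl
      linarith
    have h2 : ‖T x + (0:ℝ) • T z‖ ^ 2 - ‖T x + (-(1/2):ℝ) • T z‖ ^ 2 ≤ 0 := by
      have := (div_le_iff₀ hd).1 hr
      linarith
    linarith
  have m2 : ‖T x + ((1/2):ℝ) • T z‖ ^ 2 = ‖T x + (0:ℝ) • T z‖ ^ 2 := by
    have hl := slope_chain_left (T x) (T z) (show (0:ℝ) < 1/2 by norm_num)
    have hr := slope_chain_right (T x) (T z) (show (0:ℝ) < 1/2 by norm_num)
    rw [P0'] at hl
    rw [Dm] at hr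
    have hd : (0:ℝ) < 2 * (1/2 - 0) := by norm_num
    have h1 : 0 ≤ ‖T x + ((1/2):ℝ) • T z‖ ^ 2 - ‖T x + (0:ℝ) • T z‖ ^ 2 := by
      have := (le_div_iff₀ hd).1 hl
      linarith
    have h2 : ‖T x + ((1/2):ℝ) • T z‖ ^ 2 - ‖T x + (0:ℝ) • T z‖ ^ 2 ≤ 0 := by
      have := (div_le_iff₀ hd).1 hr
      linarith
    linarith
  -- translate to u, v
  have hux : x + (-(1/2) : ℝ) • z = u := by rw [hxdef, hzdef]; module
  have hvx : x + ((1/2) : ℝ) • z = v := by rw [hxdef, hzdef]; module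
  have hTu : T x + (-(1/2) : ℝ) • T z = T u := by rw [← map_smul, ← map_add, hux]
  have hTv : T x + ((1/2) : ℝ) • T z = T v := by rw [← map_smul, ← map_add, hvx]
  have hT0 : T x + (0 : ℝ) • T z = T x := by simp
  rw [hT0, hTu] at m1
  rw [hT0, hTv] at m2
  have hxne : x ≠ 0 := fun h => by rw [h, norm_zero] at hx1; norm_num at hx1
  have hc : 0 < ‖T x‖ := norm_pos_iff.2 (hinj x hxne)
  have hTueq : ‖T u‖ = ‖T x‖ := (sq_eq_sq₀ (norm_nonneg _) (norm_nonneg _)).1 m1.symm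
  have hTveq : ‖T v‖ = ‖T x‖ := (sq_eq_sq₀ (norm_nonneg _) (norm_nonneg _)).1 m2
  have hne : (‖T x‖)⁻¹ • T u ≠ (‖T x‖)⁻¹ • T v := by
    intro h
    have h2 : T u = T v := smul_right_injective Y (inv_ne_zero hc.ne') h
    have h3 : T (u - v) = 0 := by rw [map_sub, h2, sub_self]
    exact hinj (u - v) (sub_ne_zero.2 huv) h3
  have h1n : ‖(‖T x‖)⁻¹ • T u‖ = 1 := by
    rw [norm_smul, Real.norm_eq_abs, abs_of_pos (inv_pos.2 hc), hTueq,
      inv_mul_cancel₀ hc.ne']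
  have h2n : ‖(‖T x‖)⁻¹ • T v‖ = 1 := by
    rw [norm_smul, Real.norm_eq_abs, abs_of_pos (inv_pos.2 hc), hTveq,
      inv_mul_cancel₀ hc.ne']
  have hres := hsc _ _ h1n h2n hne
  have he : (1/2 : ℝ) • ((‖T x‖)⁻¹ • T u + (‖T x‖)⁻¹ • T v)
      = (‖T x‖)⁻¹ • ((1/2 : ℝ) • (T u + T v)) := by module
  have he2 : (1/2 : ℝ) • (T u + T v) = T x := by
    rw [← map_add, ← map_smul, ← hxdef]
  rw [he, he2, norm_smul, Real.norm_eq_abs, abs_of_pos (inv_pos.2 hc),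
    inv_mul_cancel₀ hc.ne'] at hres
  exact lt_irrefl 1 hres

end Main

section Part2
variable {X Y : Type*} [NormedAddCommGroup X] [NormedSpace ℝ X]
  [NormedAddCommGroup Y] [NormedSpace ℝ Y]

lemma inner_transfer (T : X →ₗ[ℝ] Y) (hT : T ≠ 0)
    (hpres : ∀ x y : X, rhoStar x y = 0 → rhoStar (T x) (T y) = 0)
    (hip : ∃ inner : Y → Y → ℝ,
        (∀ u v : Y, inner u v = inner v u) ∧
        (∀ (a : ℝ) (u v w : Y), inner (a • u + v) w = a * inner u w + inner v w) ∧
        (∀ u : Y, inner u u = ‖u‖ ^ 2)) :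
    ∃ inner : X → X → ℝ,
        (∀ u v : X, inner u v = inner v u) ∧
        (∀ (a : ℝ) (u v w : X), inner (a • u + v) w = a * inner u w + inner v w) ∧
        (∀ u : X, inner u u = ‖u‖ ^ 2) := by
  obtain ⟨inn, hsy, hli, hnn⟩ := hip
  have hinj := T_inj T hT hpres
  have inn_zero_left : ∀ w : Y, inn 0 w = 0 := by
    intro w
    have h := hli 1 0 0 w
    simp only [one_smul, add_zero, one_mul] at h
    linarith
  have inn_smul : ∀ (a : ℝ) (u w : Y), inn (a • u) w = a * inn u w := by
    intro a u w
    have h := hli a u 0 w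
    simpa [inn_zero_left] using h
  have inn_add : ∀ u v w : Y, inn (u + v) w = inn u w + inn v w := by
    intro u v w
    have h := hli 1 u v w
    simpa using h
  have expand : ∀ (u v : Y) (t : ℝ),
      ‖u + t • v‖ ^ 2 = ‖u‖ ^ 2 + 2 * t * inn u v + t ^ 2 * ‖v‖ ^ 2 := by
    intro u v t
    have e0 : ‖u + t • v‖ ^ 2 = inn (u + t • v) (u + t • v) := (hnn _).symm
    rw [e0, inn_add, inn_smul, hsy u (u + t • v), hsy v (u + t • v),
      inn_add, inn_smul, inn_add, inn_smul, hnn, hnn, hsy v u]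
    ring
  have rq_inn : ∀ (u v : Y) (t : ℝ), t ≠ 0 → RhoAux.rq u v t = inn u v + t * ‖v‖ ^ 2 / 2 := by
    intro u v t ht
    rw [RhoAux.rq, expand]
    field_simp
    ring
  have plusY : ∀ u v : Y, rhoPlus u v = inn u v := by
    intro u v
    refine RhoAux.rhoPlus_eq_of_tendsto ?_
    have hTT : Tendsto (fun t : ℝ => inn u v + t * ‖v‖ ^ 2 / 2) (𝓝 (0:ℝ))
        (𝓝 (inn u v + 0 * ‖v‖ ^ 2 / 2)) :=
      tendsto_const_nhds.add ((tendsto_id.mul_const _).div_const 2)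
    have hTT2 := hTT.mono_left (nhdsWithin_le_nhds : 𝓝[>] (0:ℝ) ≤ 𝓝 0)
    have hTT3 : Tendsto (fun t : ℝ => inn u v + t * ‖v‖ ^ 2 / 2) (𝓝[>] (0:ℝ))
        (𝓝 (inn u v)) := by simpa using hTT2
    refine hTT3.congr' ?_
    filter_upwards [self_mem_nhdsWithin] with t ht
    exact (rq_inn u v t (ne_of_gt (mem_Ioi.1 ht))).symm
  have minusY : ∀ u v : Y, rhoMinus u v = inn u v := by
    intro u v
    refine RhoAux.rhoMinus_eq_of_tendsto ?_
    have hTT : Tendsto (fun t : ℝ => inn u v + t * ‖v‖ ^ 2 / 2) (𝓝 (0:ℝ))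
        (𝓝 (inn u v + 0 * ‖v‖ ^ 2 / 2)) :=
      tendsto_const_nhds.add ((tendsto_id.mul_const _).div_const 2)
    have hTT2 := hTT.mono_left (nhdsWithin_le_nhds : 𝓝[<] (0:ℝ) ≤ 𝓝 0)
    have hTT3 : Tendsto (fun t : ℝ => inn u v + t * ‖v‖ ^ 2 / 2) (𝓝[<] (0:ℝ))
        (𝓝 (inn u v)) := by simpa using hTT2
    refine hTT3.congr' ?_
    filter_upwards [self_mem_nhdsWithin] with t ht
    exact (rq_inn u v t (ne_of_lt (mem_Iio.1 ht))).symm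
  have starY : ∀ u v : Y, rhoStar u v = inn u v ^ 2 := by
    intro u v
    rw [rhoStar, plusY, minusY]
    ring
  have master_plus : ∀ x y : X, x ≠ 0 →
      inn (T x) (T y) * ‖x‖ ^ 2 = rhoPlus x y * ‖T x‖ ^ 2 := by
    intro x y hx
    have hn2 : ‖x‖ ^ 2 ≠ 0 := pow_ne_zero 2 (norm_ne_zero_iff.2 hx)
    set a : ℝ := -(rhoPlus x y) / ‖x‖ ^ 2 with ha
    have hrr : a * ‖x‖ ^ 2 = -(rhoPlus x y) := div_mul_cancel₀ _ hn2
    have hz1 : -(rhoPlus x y) + rhoPlus x y = 0 := by ring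
    have hstar : rhoStar x (a • x + y) = 0 := by
      rw [rhoStar, RhoAux.rhoPlus_smul_add, RhoAux.rhoMinus_smul_add, hrr, hz1, mul_zero]
    have h := hpres _ _ hstar
    rw [map_add, map_smul, starY] at h
    have h2 : inn (T x) (a • T x + T y) = 0 := sq_eq_zero_iff.1 h
    rw [hsy, hli, hnn, hsy (T y) (T x)] at h2
    have h3 : inn (T x) (T y) = -(a * ‖T x‖ ^ 2) := by linarith
    rw [h3, ha]
    field_simp
  have master_minus : ∀ x y : X, x ≠ 0 →
      inn (T x) (T y) * ‖x‖ ^ 2 = rhoMinus x y * ‖T x‖ ^ 2 := by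
    intro x y hx
    have hn2 : ‖x‖ ^ 2 ≠ 0 := pow_ne_zero 2 (norm_ne_zero_iff.2 hx)
    set a : ℝ := -(rhoMinus x y) / ‖x‖ ^ 2 with ha
    have hrr : a * ‖x‖ ^ 2 = -(rhoMinus x y) := div_mul_cancel₀ _ hn2
    have hz1 : -(rhoMinus x y) + rhoMinus x y = 0 := by ring
    have hstar : rhoStar x (a • x + y) = 0 := by
      rw [rhoStar, RhoAux.rhoPlus_smul_add, RhoAux.rhoMinus_smul_add, hrr, hz1, zero_mul]
    have h := hpres _ _ hstar
    rw [map_add, map_smul, starY] at h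
    have h2 : inn (T x) (a • T x + T y) = 0 := sq_eq_zero_iff.1 h
    rw [hsy, hli, hnn, hsy (T y) (T x)] at h2
    have h3 : inn (T x) (T y) = -(a * ‖T x‖ ^ 2) := by linarith
    rw [h3, ha]
    field_simp
  have hpm : ∀ u v : X, rhoMinus u v = rhoPlus u v := by
    intro u v
    rcases eq_or_ne u 0 with rfl | hu
    · rw [RhoAux.rho_zero_left_plus, RhoAux.rho_zero_left_minus]
    · have h1 := master_plus u v hu
      have h2 := master_minus u v hu
      have hTn2 : (0:ℝ) < ‖T u‖ ^ 2 := pow_pos (norm_pos_iff.2 (hinj u hu)) 2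
      exact mul_right_cancel₀ (ne_of_gt hTn2) (h2.symm.trans h1)
  -- step C
  have stepC : ∀ x y : X, ‖x‖ = 1 → ‖y‖ = 1 → rhoPlus x y = 0 →
      (∀ t : ℝ, ‖x + t • y‖ ^ 2 * ‖T x‖ ^ 2 = ‖T x‖ ^ 2 + t ^ 2 * ‖T y‖ ^ 2)
        ∧ ‖T x‖ = ‖T y‖ := by
    intro x y hx hy hr
    have hx0 : x ≠ 0 := fun h => by rw [h, norm_zero] at hx; norm_num at hx
    have hy0 : y ≠ 0 := fun h => by rw [h, norm_zero] at hy; norm_num at hy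
    have fxpos : (0:ℝ) < ‖T x‖ ^ 2 := pow_pos (norm_pos_iff.2 (hinj x hx0)) 2
    have hinn0 : inn (T x) (T y) = 0 := by
      have h := master_plus x y hx0
      rw [hr, zero_mul, hx, one_pow, mul_one] at h
      exact h
    have hindep : ∀ t : ℝ, x + t • y ≠ 0 := by
      intro t ht
      have ht0 : t ≠ 0 := by
        rintro rfl
        rw [zero_smul, add_zero] at ht
        exact hx0 ht
      have hyx : y = (-t⁻¹) • x := by
        have ht' : t • y + x = 0 := by rw [add_comm]; exact ht
        have h1 : t • y = -x := eq_neg_of_add_eq_zero_left ht' 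
        have h3 := congrArg (fun w : X => t⁻¹ • w) h1
        simp only [smul_smul, inv_mul_cancel₀ ht0, one_smul, smul_neg] at h3
        rw [h3, neg_smul]
      have hcontra := RhoAux.rhoPlus_smul_self x (-t⁻¹)
      rw [← hyx, hr, hx, one_pow, mul_one] at hcontra
      exact inv_ne_zero ht0 (by linarith)
    have hN : ∀ t : ℝ, ‖T x + t • T y‖ ^ 2 = ‖T x‖ ^ 2 + t ^ 2 * ‖T y‖ ^ 2 := by
      intro t
      rw [expand, hinn0]
      ring
    have hODE : ∀ t : ℝ, t * ‖T y‖ ^ 2 * ‖x + t • y‖ ^ 2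
        = rhoPlus (x + t • y) y * (‖T x‖ ^ 2 + t ^ 2 * ‖T y‖ ^ 2) := by
      intro t
      have hm := master_plus (x + t • y) y (hindep t)
      have hTx : T (x + t • y) = T x + t • T y := by rw [map_add, map_smul]
      rw [hTx] at hm
      have hi : inn (T x + t • T y) (T y) = t * ‖T y‖ ^ 2 := by
        rw [inn_add, inn_smul, hinn0, hnn]
        ring
      rw [hi, hN t] at hm
      exact hm
    have hm' : ∀ t : ℝ, HasDerivAt (fun s : ℝ => ‖x + s • y‖ ^ 2)
        (2 * rhoPlus (x + t • y) y) t := fun t => RhoAux.hasDerivAt_nrmsq hpm x y t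
    have hden : ∀ t : ℝ, (0:ℝ) < ‖T x‖ ^ 2 + t ^ 2 * ‖T y‖ ^ 2 := fun t =>
      add_pos_of_pos_of_nonneg fxpos (by positivity)
    set G : ℝ → ℝ := fun s => ‖x + s • y‖ ^ 2 / (‖T x‖ ^ 2 + s ^ 2 * ‖T y‖ ^ 2) with hGdef
    have hGd : ∀ t : ℝ, HasDerivAt G 0 t := by
      intro t
      have h1 : HasDerivAt (fun s : ℝ => s ^ 2) (2 * t) t := by
        simpa using hasDerivAt_pow 2 t
      have hd : HasDerivAt (fun s : ℝ => ‖T x‖ ^ 2 + s ^ 2 * ‖T y‖ ^ 2)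
          (2 * t * ‖T y‖ ^ 2) t := (h1.mul_const (‖T y‖ ^ 2)).const_add (‖T x‖ ^ 2)
      have hq := (hm' t).div hd (ne_of_gt (hden t))
      refine hq.congr_deriv ?_
      rw [div_eq_zero_iff]
      left
      linear_combination (-2 : ℝ) * hODE t
    have hGconst : ∀ t : ℝ, G t = G 0 := fun t =>
      is_const_of_deriv_eq_zero (fun s => (hGd s).differentiableAt)
        (fun s => (hGd s).deriv) t 0
    have hformula : ∀ t : ℝ, ‖x + t • y‖ ^ 2 * ‖T x‖ ^ 2
        = ‖T x‖ ^ 2 + t ^ 2 * ‖T y‖ ^ 2 := by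
      intro t
      have h := hGconst t
      rw [hGdef] at h
      simp only at h
      rw [div_eq_div_iff (ne_of_gt (hden t)) (ne_of_gt (hden 0))] at h
      simp only [zero_smul, add_zero, hx, one_pow] at h
      rw [show (0:ℝ) ^ 2 * ‖T y‖ ^ 2 = 0 by ring, add_zero, one_mul] at h
      exact h
    have hfy : ‖T y‖ ^ 2 = ‖T x‖ ^ 2 := by
      have hA : Tendsto (fun t : ℝ => ‖t⁻¹ • x + y‖ ^ 2) atTop (𝓝 (‖y‖ ^ 2)) := by
        have h1 : Tendsto (fun t : ℝ => t⁻¹ • x + y) atTop (𝓝 ((0:ℝ) • x + y)) :=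
          (tendsto_inv_atTop_zero.smul_const x).add_const y
        rw [zero_smul, zero_add] at h1
        exact h1.norm.pow 2
      have hB : Tendsto (fun t : ℝ => ‖T y‖ ^ 2 / ‖T x‖ ^ 2 + (t ^ 2)⁻¹) atTop
          (𝓝 (‖T y‖ ^ 2 / ‖T x‖ ^ 2 + 0)) := by
        refine tendsto_const_nhds.add ?_
        have h2 : Tendsto (fun t : ℝ => t ^ 2) atTop atTop :=
          tendsto_pow_atTop (two_ne_zero)
        exact h2.inv_tendsto_atTop
      have hAB : ∀ᶠ t : ℝ in atTop, ‖T y‖ ^ 2 / ‖T x‖ ^ 2 + (t ^ 2)⁻¹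
          = ‖t⁻¹ • x + y‖ ^ 2 := by
        filter_upwards [eventually_ge_atTop (1:ℝ)] with t ht
        have ht0 : t ≠ 0 := by linarith
        have e1 : t⁻¹ • x + y = t⁻¹ • (x + t • y) := by
          rw [smul_add, smul_smul, inv_mul_cancel₀ ht0, one_smul]
        have h2 : ‖x + t • y‖ ^ 2 = (‖T x‖ ^ 2 + t ^ 2 * ‖T y‖ ^ 2) / ‖T x‖ ^ 2 := by
          rw [eq_div_iff (ne_of_gt fxpos)]
          exact hformula t
        rw [e1, norm_smul, Real.norm_eq_abs, mul_pow, sq_abs, h2]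
        have hTx0 : ‖T x‖ ≠ 0 := (norm_pos_iff.2 (hinj x hx0)).ne'
        field_simp
        ring
      have hu := tendsto_nhds_unique (hB.congr' hAB) hA
      rw [hy, one_pow, add_zero] at hu
      have hTx0 : ‖T x‖ ≠ 0 := (norm_pos_iff.2 (hinj x hx0)).ne'
      field_simp at hu
      rw [hu]
    exact ⟨hformula, ((sq_eq_sq₀ (norm_nonneg _) (norm_nonneg _)).1 hfy.symm)⟩
  -- step D
  have hfeq : ∀ x y : X, ‖x‖ = 1 → ‖y‖ = 1 → ‖T x‖ = ‖T y‖ := by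
    intro x y hx hy
    have hx0 : x ≠ 0 := fun h => by rw [h, norm_zero] at hx; norm_num at hx
    have fxpos : (0:ℝ) < ‖T x‖ ^ 2 := pow_pos (norm_pos_iff.2 (hinj x hx0)) 2
    set r : ℝ := rhoPlus x y with hrdef
    have hz : rhoPlus x ((-r) • x + y) = 0 := by
      rw [RhoAux.rhoPlus_smul_add, hx, one_pow, ← hrdef]
      ring
    rcases eq_or_ne ((-r) • x + y) 0 with hz0 | hz0
    · have hyx : y = r • x := by
        have h2 := eq_neg_of_add_eq_zero_left hz0
        have h3 := congrArg (fun w : X => -w) h2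
        simpa using h3.symm
      have hr1 : |r| = 1 := by
        rw [hyx, norm_smul, Real.norm_eq_abs, hx, mul_one] at hy
        exact hy
      rw [hyx, map_smul, norm_smul, Real.norm_eq_abs, hr1, one_mul]
    · set z : X := (-r) • x + y with hzdef
      have hznorm : (0:ℝ) < ‖z‖ := norm_pos_iff.2 hz0
      set e2 : X := ‖z‖⁻¹ • z with he2def
      have he2 : ‖e2‖ = 1 := by
        rw [he2def, norm_smul, Real.norm_eq_abs, abs_of_pos (inv_pos.2 hznorm),
          inv_mul_cancel₀ (ne_of_gt hznorm)]
      have hre2 : rhoPlus x e2 = 0 := by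
        rw [he2def, RhoAux.rhoPlus_smul_right x z (inv_pos.2 hznorm), hz, mul_zero]
      obtain ⟨hformula, hTeq⟩ := stepC x e2 hx he2 hre2
      have hE : ∀ t : ℝ, ‖x + t • e2‖ ^ 2 = 1 + t ^ 2 := by
        intro t
        have h := hformula t
        rw [← hTeq] at h
        have h2 : ‖T x‖ ^ 2 + t ^ 2 * ‖T x‖ ^ 2 = (1 + t ^ 2) * ‖T x‖ ^ 2 := by ring
        exact mul_right_cancel₀ (ne_of_gt fxpos) (h.trans h2)
      have hzz : ‖z‖ • e2 = z := by
        rw [he2def, smul_smul, mul_inv_cancel₀ (ne_of_gt hznorm), one_smul]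
      have hyrz : y = r • x + z := by rw [hzdef]; module
      have hy2 : (1:ℝ) = r ^ 2 + ‖z‖ ^ 2 := by
        rcases eq_or_ne r 0 with hr0 | hr0
        · have hyz : y = z := by rw [hyrz, hr0, zero_smul, zero_add]
          rw [hr0, ← hyz, hy]
          norm_num
        · have hyr : y = r • (x + (‖z‖ / r) • e2) := by
            rw [smul_add, smul_smul, show r * (‖z‖ / r) = ‖z‖ by field_simp, hzz, ← hyrz]
          have h1 := hE (‖z‖ / r)
          have h2 : ‖y‖ ^ 2 = r ^ 2 * (1 + (‖z‖ / r) ^ 2) := by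
            rw [hyr, norm_smul, Real.norm_eq_abs, mul_pow, sq_abs, h1]
          rw [hy, one_pow] at h2
          field_simp at h2
          linarith
      have hinn0 : inn (T x) (T z) = 0 := by
        have h := master_plus x z hx0
        rw [hz, zero_mul, hx, one_pow, mul_one] at h
        exact h
      have hTy2 : ‖T y‖ ^ 2 = (r ^ 2 + ‖z‖ ^ 2) * ‖T x‖ ^ 2 := by
        have hTz : ‖z‖ • T e2 = T z := by
          rw [he2def, map_smul, smul_smul, mul_inv_cancel₀ (ne_of_gt hznorm), one_smul]
        have hTy : T y = r • T x + ‖z‖ • T e2 := by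
          rw [hyrz, map_add, map_smul, hTz]
        rw [hTy]
        have hi : inn (r • T x) (T e2) = 0 := by
          rw [inn_smul]
          have hie : inn (T x) (T e2) = 0 := by
            rw [he2def, map_smul, hsy, inn_smul, hsy (T z) (T x), hinn0, mul_zero]
          rw [hie, mul_zero]
        rw [expand (r • T x) (T e2) (‖z‖), hi, norm_smul,
          Real.norm_eq_abs, mul_pow, sq_abs, ← hTeq]
        ring
      rw [← hy2, one_mul] at hTy2
      exact ((sq_eq_sq₀ (norm_nonneg _) (norm_nonneg _)).1 hTy2).symm
  -- final construction
  obtain ⟨x₀, hx₀⟩ := exists_ne_zero_img T hT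
  have hx₀0 : x₀ ≠ 0 := fun h => hx₀ (by rw [h, map_zero])
  have hn₀ : (0:ℝ) < ‖x₀‖ := norm_pos_iff.2 hx₀0
  set x₁ : X := ‖x₀‖⁻¹ • x₀ with hx₁def
  have hx₁ : ‖x₁‖ = 1 := by
    rw [hx₁def, norm_smul, Real.norm_eq_abs, abs_of_pos (inv_pos.2 hn₀),
      inv_mul_cancel₀ (ne_of_gt hn₀)]
  have hx₁0 : x₁ ≠ 0 := fun h => by rw [h, norm_zero] at hx₁; norm_num at hx₁
  have hcpos : (0:ℝ) < ‖T x₁‖ ^ 2 := pow_pos (norm_pos_iff.2 (hinj _ hx₁0)) 2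
  refine ⟨fun u v => inn (T u) (T v) / ‖T x₁‖ ^ 2, ?_, ?_, ?_⟩
  · intro u v
    show inn (T u) (T v) / ‖T x₁‖ ^ 2 = inn (T v) (T u) / ‖T x₁‖ ^ 2
    rw [hsy]
  · intro a u v w
    show inn (T (a • u + v)) (T w) / ‖T x₁‖ ^ 2
      = a * (inn (T u) (T w) / ‖T x₁‖ ^ 2) + inn (T v) (T w) / ‖T x₁‖ ^ 2
    rw [map_add, map_smul, hli, add_div, mul_div_assoc]
  · intro u
    rcases eq_or_ne u 0 with rfl | hu
    · show inn (T 0) (T 0) / ‖T x₁‖ ^ 2 = ‖(0:X)‖ ^ 2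
      rw [map_zero, inn_zero_left, norm_zero]
      norm_num
    · have hnu : (0:ℝ) < ‖u‖ := norm_pos_iff.2 hu
      have hu1 : ‖(‖u‖⁻¹ • u)‖ = 1 := by
        rw [norm_smul, Real.norm_eq_abs, abs_of_pos (inv_pos.2 hnu),
          inv_mul_cancel₀ (ne_of_gt hnu)]
      have h := hfeq (‖u‖⁻¹ • u) x₁ hu1 hx₁
      rw [map_smul, norm_smul, Real.norm_eq_abs, abs_of_pos (inv_pos.2 hnu)] at h
      have hTx1 : ‖T x₁‖ ≠ 0 := (norm_pos_iff.2 (hinj _ hx₁0)).ne'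
      have hTu : ‖T u‖ = ‖u‖ * ‖T x₁‖ := by
        field_simp at h
        linarith [h]
      show inn (T u) (T u) / ‖T x₁‖ ^ 2 = ‖u‖ ^ 2
      rw [hnn, hTu]
      field_simp

end Part2

theorem strictConvex_and_inner_transfer {X Y : Type*} [NormedAddCommGroup X]
    [NormedSpace ℝ X] [NormedAddCommGroup Y] [NormedSpace ℝ Y]
    (hdim : 2 ≤ Module.rank ℝ X) (T : X →ₗ[ℝ] Y) (hT : T ≠ 0)
    (hpres : ∀ x y : X, rhoStar x y = 0 → rhoStar (T x) (T y) = 0) :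
    ((∀ u v : Y, ‖u‖ = 1 → ‖v‖ = 1 → u ≠ v → ‖(1 / 2 : ℝ) • (u + v)‖ < 1) →
      (∀ u v : X, ‖u‖ = 1 → ‖v‖ = 1 → u ≠ v → ‖(1 / 2 : ℝ) • (u + v)‖ < 1)) ∧
    ((∃ inner : Y → Y → ℝ,
        (∀ u v : Y, inner u v = inner v u) ∧
        (∀ (a : ℝ) (u v w : Y), inner (a • u + v) w = a * inner u w + inner v w) ∧
        (∀ u : Y, inner u u = ‖u‖ ^ 2)) →
      (∃ inner : X → X → ℝ,
        (∀ u v : X, inner u v = inner v u) ∧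
        (∀ (a : ℝ) (u v w : X), inner (a • u + v) w = a * inner u w + inner v w) ∧
        (∀ u : X, inner u u = ‖u‖ ^ 2))) := by
  exact ⟨fun hsc => strict_transfer T hT hpres hsc, fun hip => inner_transfer T hT hpres hip⟩
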